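/- Let Θ*∈S^d be positive definite and δ∈[0,2]. Let Θ∈S^d be positive semidefinite with Θ⪯Θ* and ‖Θ^{1/2}Θ*^{−1/2}−I‖ ≤ δ, and let H∈S^d satisfy −Θ*^{−1} ≺ H ≺ Θ*^{−1}. Then −(1/2)ln det(I − Θ^{1/2}HΘ^{1/2}) ≤ Υ(H;Θ). -/

import Mathlib

set_option maxHeartbeats 1000000
set_option synthInstance.maxHeartbeats 400000
set_option linter.deprecated false
set_option linter.unusedVariables false


open Matrix MeasureTheory Real Filter

noncomputable section

/-- Frobenius norm of a matrix. -/
def frobNorm {d : ℕ} (A : Matrix (Fin d) (Fin d) ℝ) : ℝ :=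
  Real.sqrt (∑ i, ∑ j, (A i j) ^ 2)

/-- Spectral norm of a matrix. -/
def specNorm {d : ℕ} (A : Matrix (Fin d) (Fin d) ℝ) : ℝ :=
  ‖Matrix.toEuclideanCLM (𝕜 := ℝ) A‖

open scoped Classical in
/-- The square root of a positive semidefinite real matrix (junk value `0` otherwise). -/
def msqrt {d : ℕ} (A : Matrix (Fin d) (Fin d) ℝ) : Matrix (Fin d) (Fin d) ℝ :=
  if h : A.PosSemidef then
    (h.1.eigenvectorUnitary : Matrix (Fin d) (Fin d) ℝ) *
      Matrix.diagonal (fun i => Real.sqrt (h.1.eigenvalues i)) *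
      (star h.1.eigenvectorUnitary : Matrix (Fin d) (Fin d) ℝ)
  else 0

/-- The standard Gaussian distribution on ℝ^d. -/
def stdGaussian (d : ℕ) : Measure (Fin d → ℝ) :=
  Measure.pi fun _ => ProbabilityTheory.gaussianReal 0 1

/-- The Gaussian distribution `N(θ,Θ)` on ℝ^d: the law of `θ + Θ^{1/2} ξ`. -/
def gaussianVec {d : ℕ} (θ : Fin d → ℝ) (Θ : Matrix (Fin d) (Fin d) ℝ) :
    Measure (Fin d → ℝ) :=
  (stdGaussian d).map (fun ξ => θ + (msqrt Θ).mulVec ξ)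

/-- The (d+1)×(d+1) symmetric matrix `[[H,h];[hᵀ,0]]`. -/
def liftSym {d : ℕ} (H : Matrix (Fin d) (Fin d) ℝ) (h : Fin d → ℝ) :
    Matrix (Fin (d+1)) (Fin (d+1)) ℝ := fun i j =>
  if hi : (i : ℕ) < d then
    if hj : (j : ℕ) < d then H ⟨i, hi⟩ ⟨j, hj⟩ else h ⟨i, hi⟩
  else if hj : (j : ℕ) < d then h ⟨j, hj⟩ else 0

/-- The d×(d+1) matrix `[H,h]`. -/
def liftRect {d : ℕ} (H : Matrix (Fin d) (Fin d) ℝ) (h : Fin d → ℝ) :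
    Matrix (Fin d) (Fin (d+1)) ℝ := fun i j =>
  if hj : (j : ℕ) < d then H i ⟨j, hj⟩ else h i

/-- The vector `[θ;1] ∈ ℝ^{d+1}`. -/
def append1 {d : ℕ} (θ : Fin d → ℝ) : Fin (d+1) → ℝ := fun i =>
  if hi : (i : ℕ) < d then θ ⟨i, hi⟩ else 1

/-- `Υ(H;Θ)`. -/
def Upsilon {d : ℕ} (Θstar : Matrix (Fin d) (Fin d) ℝ) (δ : ℝ)
    (H Θ : Matrix (Fin d) (Fin d) ℝ) : ℝ :=
  -(1/2) * Real.log ((1 - msqrt Θstar * H * msqrt Θstar).det)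
  + (1/2) * ((Θ - Θstar) * H).trace
  + δ * (2 + δ) * (frobNorm (msqrt Θstar * H * msqrt Θstar)) ^ 2
      / (2 * (1 - specNorm (msqrt Θstar * H * msqrt Θstar)))

/-- `Γ(h,H;Z)`. -/
def Gammaf {d : ℕ} (Θstar : Matrix (Fin d) (Fin d) ℝ) (h : Fin d → ℝ)
    (H : Matrix (Fin d) (Fin d) ℝ) (Z : Matrix (Fin (d+1)) (Fin (d+1)) ℝ) : ℝ :=
  (1/2) * (Z * (liftSym H h + (liftRect H h)ᵀ * (Θstar⁻¹ - H)⁻¹ * liftRect H h)).trace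

/-- `Φ(h,H;Θ,Z) = Υ(H;Θ) + Γ(h,H;Z)`. -/
def PhiG {d : ℕ} (Θstar : Matrix (Fin d) (Fin d) ℝ) (δ : ℝ) (h : Fin d → ℝ)
    (H Θ : Matrix (Fin d) (Fin d) ℝ) (Z : Matrix (Fin (d+1)) (Fin (d+1)) ℝ) : ℝ :=
  Upsilon Θstar δ H Θ + Gammaf Θstar h H Z

lemma msqrt_mul_self {d : ℕ} {A : Matrix (Fin d) (Fin d) ℝ} (h : A.PosSemidef) :
    msqrt A * msqrt A = A := by
  have hs := h.1.spectral_theorem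
  rw [Unitary.conjStarAlgAut_apply] at hs
  unfold msqrt
  rw [dif_pos h]
  have hU : (star h.1.eigenvectorUnitary : Matrix (Fin d) (Fin d) ℝ) *
      (h.1.eigenvectorUnitary : Matrix (Fin d) (Fin d) ℝ) = 1 :=
    Unitary.coe_star_mul_self _
  conv_rhs => rw [hs]
  calc _ = (h.1.eigenvectorUnitary : Matrix (Fin d) (Fin d) ℝ) *
      (Matrix.diagonal (fun i => Real.sqrt (h.1.eigenvalues i)) *
        ((star h.1.eigenvectorUnitary : Matrix (Fin d) (Fin d) ℝ) *
      (h.1.eigenvectorUnitary : Matrix (Fin d) (Fin d) ℝ)) *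
      Matrix.diagonal (fun i => Real.sqrt (h.1.eigenvalues i))) *
      (star h.1.eigenvectorUnitary : Matrix (Fin d) (Fin d) ℝ) := by
        simp only [mul_assoc]
    _ = _ := by
        rw [hU, mul_one, Matrix.diagonal_mul_diagonal]
        congr 2
        ext i j
        simp only [Matrix.diagonal_apply, Function.comp_apply, RCLike.ofReal_real_eq_id, id]
        split_ifs with hij
        · exact Real.mul_self_sqrt (h.eigenvalues_nonneg i)
        · rfl

lemma msqrt_conjTranspose {d : ℕ} {A : Matrix (Fin d) (Fin d) ℝ} (h : A.PosSemidef) :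
    (msqrt A)ᴴ = msqrt A := by
  unfold msqrt
  rw [dif_pos h]
  simp [Matrix.conjTranspose_mul, Matrix.mul_assoc, Matrix.star_eq_conjTranspose]

def toE {d : ℕ} (x : Fin d → ℝ) : EuclideanSpace ℝ (Fin d) := (WithLp.equiv 2 _).symm x

lemma toE_mulVec (A : Matrix (Fin d) (Fin d) ℝ) (x : Fin d → ℝ) :
    Matrix.toEuclideanCLM (𝕜 := ℝ) A (toE x) = toE (A *ᵥ x) := by
  rw [toE, WithLp.equiv_symm_apply, Matrix.toEuclideanCLM_toLp]
  rfl

lemma norm_toE_sq (x : Fin d → ℝ) : ‖toE x‖ ^ 2 = ∑ i, x i ^ 2 := by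
  rw [EuclideanSpace.norm_eq, sq_sqrt (by positivity)]
  simp [toE, WithLp.equiv_symm_apply, PiLp.toLp_apply, sq_abs]

lemma norm_toE (x : Fin d → ℝ) : ‖toE x‖ = Real.sqrt (∑ i, x i ^ 2) := by
  rw [← norm_toE_sq, Real.sqrt_sq (norm_nonneg _)]

lemma specNorm_nonneg (A : Matrix (Fin d) (Fin d) ℝ) : 0 ≤ specNorm A := norm_nonneg _

lemma norm_mulVec_le (A : Matrix (Fin d) (Fin d) ℝ) (x : Fin d → ℝ) :
    ‖toE (A *ᵥ x)‖ ≤ specNorm A * ‖toE x‖ := by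
  rw [← toE_mulVec]; exact ContinuousLinearMap.le_opNorm _ _

lemma specNorm_mul_le (A B : Matrix (Fin d) (Fin d) ℝ) :
    specNorm (A * B) ≤ specNorm A * specNorm B := by
  unfold specNorm
  rw [_root_.map_mul]
  exact ContinuousLinearMap.opNorm_comp_le _ _

lemma specNorm_one_le : specNorm (1 : Matrix (Fin d) (Fin d) ℝ) ≤ 1 := by
  unfold specNorm
  rw [_root_.map_one]
  exact ContinuousLinearMap.norm_id_le

lemma specNorm_transpose (A : Matrix (Fin d) (Fin d) ℝ) : specNorm Aᵀ = specNorm A := by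
  unfold specNorm
  rw [← Matrix.conjTranspose_eq_transpose_of_trivial, ← Matrix.star_eq_conjTranspose, map_star]
  exact LinearIsometryEquiv.norm_map ContinuousLinearMap.adjoint _

lemma specNorm_le_add_one (A : Matrix (Fin d) (Fin d) ℝ) :
    specNorm A ≤ specNorm (A - 1) + 1 := by
  have h : specNorm A ≤ specNorm (A - 1) + specNorm (1 : Matrix (Fin d) (Fin d) ℝ) := by
    have h2 := norm_add_le (Matrix.toEuclideanCLM (𝕜 := ℝ) (A - 1))
      (Matrix.toEuclideanCLM (𝕜 := ℝ) (1 : Matrix (Fin d) (Fin d) ℝ))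
    rw [← _root_.map_add, sub_add_cancel] at h2
    exact h2
  linarith [specNorm_one_le (d := d)]

lemma toE_sub (x y : Fin d → ℝ) : toE (x - y) = toE x - toE y := rfl

lemma inner_toE (x y : Fin d → ℝ) : (inner ℝ (toE x) (toE y) : ℝ) = x ⬝ᵥ y := by
  simp [toE, PiLp.inner_apply, dotProduct, WithLp.equiv_symm_apply, PiLp.toLp_apply, mul_comm]

lemma dot_self_eq (x : Fin d → ℝ) : x ⬝ᵥ x = ‖toE x‖ ^ 2 := by
  rw [norm_toE_sq]; simp [dotProduct, sq]

lemma abs_dot_le (x y : Fin d → ℝ) : |x ⬝ᵥ y| ≤ ‖toE x‖ * ‖toE y‖ := by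
  rw [← inner_toE]; exact abs_real_inner_le_norm _ _

lemma specNorm_le_bound (M : Matrix (Fin d) (Fin d) ℝ) {c : ℝ} (hc : 0 ≤ c)
    (h : ∀ x, ‖toE (M *ᵥ x)‖ ≤ c * ‖toE x‖) : specNorm M ≤ c := by
  apply ContinuousLinearMap.opNorm_le_bound _ hc
  intro x
  have h2 := h (WithLp.equiv 2 _ x)
  rw [← toE_mulVec] at h2
  simpa [toE] using h2

lemma isHermitian_of_isSymm {A : Matrix (Fin d) (Fin d) ℝ} (h : A.IsSymm) : A.IsHermitian := by
  rw [Matrix.IsHermitian, Matrix.conjTranspose_eq_transpose_of_trivial]; exact h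

lemma dot_symm_mulVec {M : Matrix (Fin d) (Fin d) ℝ} (hM : M.IsHermitian) (x y : Fin d → ℝ) :
    x ⬝ᵥ (M *ᵥ y) = (M *ᵥ x) ⬝ᵥ y := by
  rw [Matrix.dotProduct_mulVec, ← Matrix.mulVec_transpose]
  congr 1
  rw [← Matrix.conjTranspose_eq_transpose_of_trivial, hM]

lemma specNorm_le_one_of_psd {M : Matrix (Fin d) (Fin d) ℝ} (hM : M.PosSemidef)
    (h1 : (1 - M).PosSemidef) : specNorm M ≤ 1 := by
  apply specNorm_le_bound _ zero_le_one
  intro x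
  have hS := msqrt_conjTranspose hM
  have hSS : msqrt M * msqrt M = M := msqrt_mul_self hM
  have h2 : ((msqrt M)ᴴ * (1 - M) * msqrt M).PosSemidef := h1.conjTranspose_mul_mul_same _
  have hSH : (msqrt M)ᴴ = msqrt M := hS
  have key : (M - M * M).PosSemidef := by
    have e : (msqrt M)ᴴ * (1 - M) * msqrt M = M - M * M := by
      have e2 : msqrt M * (msqrt M * msqrt M) * msqrt M
          = (msqrt M * msqrt M) * (msqrt M * msqrt M) := by
        simp only [mul_assoc]
      rw [hSS] at e2
      rw [hSH, mul_sub, mul_one, sub_mul, hSS, e2]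
    rwa [e] at h2
  have h3 := key.dotProduct_mulVec_nonneg x
  rw [star_trivial, Matrix.sub_mulVec, dotProduct_sub] at h3
  have hb : x ⬝ᵥ ((M * M) *ᵥ x) = ‖toE (M *ᵥ x)‖ ^ 2 := by
    rw [← Matrix.mulVec_mulVec, dot_symm_mulVec hM.isHermitian, dot_self_eq]
  have ha : x ⬝ᵥ (M *ᵥ x) ≤ ‖toE x‖ * ‖toE (M *ᵥ x)‖ :=
    le_trans (le_abs_self _) (abs_dot_le _ _)
  rw [hb] at h3
  nlinarith [norm_nonneg (toE (M *ᵥ x)), norm_nonneg (toE x)]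

lemma posDef_one_sub {A : Matrix (Fin d) (Fin d) ℝ} (hA : A.IsHermitian)
    (h : specNorm A < 1) : (1 - A).PosDef := by
  apply Matrix.PosDef.of_dotProduct_mulVec_pos
  · exact Matrix.isHermitian_one.sub hA
  · intro x hx
    rw [star_trivial, Matrix.sub_mulVec, Matrix.one_mulVec, dotProduct_sub, dot_self_eq]
    have h1 : |x ⬝ᵥ (A *ᵥ x)| ≤ specNorm A * ‖toE x‖ ^ 2 := by
      calc |x ⬝ᵥ (A *ᵥ x)| ≤ ‖toE x‖ * ‖toE (A *ᵥ x)‖ := abs_dot_le _ _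
        _ ≤ ‖toE x‖ * (specNorm A * ‖toE x‖) := by
            gcongr; exact norm_mulVec_le _ _
        _ = specNorm A * ‖toE x‖ ^ 2 := by ring
    have hx2 : 0 < ‖toE x‖ ^ 2 := by
      have h0 : toE x ≠ 0 := fun hc => hx (by simpa [toE] using congrArg (WithLp.equiv 2 _) hc)
      exact pow_pos (norm_pos_iff.mpr h0) 2
    have := abs_le.mp h1
    nlinarith
lemma specNorm_inv_one_sub {A : Matrix (Fin d) (Fin d) ℝ} (hdet : IsUnit (1 - A).det)
    (h : specNorm A < 1) : specNorm (1 - A)⁻¹ ≤ (1 - specNorm A)⁻¹ := by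
  have hpos : 0 < 1 - specNorm A := by linarith
  apply specNorm_le_bound _ (by positivity)
  intro x
  set y := (1 - A)⁻¹ *ᵥ x with hy
  have key : (1 - A) *ᵥ y = x := by
    rw [hy, Matrix.mulVec_mulVec, Matrix.mul_nonsing_inv _ hdet, Matrix.one_mulVec]
  have e : y - A *ᵥ y = x := by
    rw [← key, Matrix.sub_mulVec, Matrix.one_mulVec]
  have h2 : ‖toE y‖ - ‖toE (A *ᵥ y)‖ ≤ ‖toE x‖ := by
    calc ‖toE y‖ - ‖toE (A *ᵥ y)‖ ≤ ‖toE y - toE (A *ᵥ y)‖ := norm_sub_norm_le _ _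
      _ = ‖toE x‖ := by rw [← toE_sub, e]
  have h3 : ‖toE (A *ᵥ y)‖ ≤ specNorm A * ‖toE y‖ := norm_mulVec_le _ _
  rw [inv_mul_eq_div, le_div_iff₀ hpos]
  nlinarith [norm_nonneg (toE y)]

lemma specNorm_sq (A : Matrix (Fin d) (Fin d) ℝ) : specNorm A ^ 2 = specNorm (Aᵀ * A) := by
  unfold specNorm
  rw [_root_.map_mul]
  have h : Matrix.toEuclideanCLM (𝕜 := ℝ) Aᵀ = star (Matrix.toEuclideanCLM (𝕜 := ℝ) A) := by
    rw [← Matrix.conjTranspose_eq_transpose_of_trivial, ← Matrix.star_eq_conjTranspose, map_star]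
  rw [h, ContinuousLinearMap.star_eq_adjoint, ContinuousLinearMap.mul_def,
    ContinuousLinearMap.norm_adjoint_comp_self, sq]

lemma specNorm_le_one_of_contract {Q : Matrix (Fin d) (Fin d) ℝ}
    (h : (1 - Qᵀ * Q).PosSemidef) : specNorm Q ≤ 1 := by
  have hpsd : (Qᵀ * Q).PosSemidef := by
    have := Matrix.posSemidef_conjTranspose_mul_self Q
    rwa [Matrix.conjTranspose_eq_transpose_of_trivial] at this
  have h2 : specNorm (Qᵀ * Q) ≤ 1 := specNorm_le_one_of_psd hpsd h
  have h3 := specNorm_sq Q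
  nlinarith [specNorm_nonneg Q]

lemma specNorm_eq_zero_of_dzero (h : d = 0) (B : Matrix (Fin d) (Fin d) ℝ) :
    specNorm B ≤ 0 := by
  apply specNorm_le_bound _ le_rfl
  intro x
  subst h
  simp [norm_toE]

lemma specNorm_lt_one {B : Matrix (Fin d) (Fin d) ℝ} (hB : B.IsHermitian)
    (h1 : (1 - B).PosDef) (h2 : (1 + B).PosDef) : specNorm B < 1 := by
  rcases Nat.eq_zero_or_pos d with hd | hd
  · exact lt_of_le_of_lt (specNorm_eq_zero_of_dzero hd B) one_pos
  have : Nonempty (Fin d) := Fin.pos_iff_nonempty.mp hd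
  set μ := hB.eigenvalues with hμ
  set b := hB.eigenvectorBasis with hb
  have hTb : ∀ i, Matrix.toEuclideanCLM (𝕜 := ℝ) B (b i) = μ i • b i := by
    intro i
    have h0 : Matrix.toEuclideanCLM (𝕜 := ℝ) B (b i) = toE (B *ᵥ ⇑(b i)) := toE_mulVec B _
    rw [h0, hB.mulVec_eigenvectorBasis]
    rfl
  have hmu : ∀ i, |μ i| < 1 := by
    intro i
    have hv1 : ‖b i‖ = 1 := b.orthonormal.1 i
    have hvne : ⇑(b i) ≠ 0 := by
      intro hc
      have : (b i : EuclideanSpace ℝ (Fin d)) = 0 := by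
        ext j; exact congrFun hc j
      rw [this, norm_zero] at hv1; norm_num at hv1
    have hdot : (⇑(b i) : Fin d → ℝ) ⬝ᵥ ⇑(b i) = 1 := by
      have : (⇑(b i) : Fin d → ℝ) ⬝ᵥ ⇑(b i) = ‖toE ⇑(b i)‖ ^ 2 := dot_self_eq _
      rw [this]
      have he : toE ⇑(b i) = b i := rfl
      rw [he, hv1]; norm_num
    have hB1 := h1.dotProduct_mulVec_pos hvne
    have hB2 := h2.dotProduct_mulVec_pos hvne
    rw [star_trivial, Matrix.sub_mulVec, Matrix.one_mulVec, dotProduct_sub,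
      hB.mulVec_eigenvectorBasis, dotProduct_smul, hdot] at hB1
    rw [star_trivial, Matrix.add_mulVec, Matrix.one_mulVec, dotProduct_add,
      hB.mulVec_eigenvectorBasis, dotProduct_smul, hdot] at hB2
    rw [abs_lt]
    constructor <;> [skip; skip] <;> simp only [smul_eq_mul, mul_one] at hB1 hB2 <;> linarith
  obtain ⟨r, hr0, hr1, hrb⟩ : ∃ r, 0 ≤ r ∧ r < 1 ∧ ∀ i, |μ i| ≤ r := by
    refine ⟨Finset.univ.sup' Finset.univ_nonempty (fun i => |μ i|), ?_, ?_, ?_⟩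
    · exact le_trans (abs_nonneg _)
        (Finset.le_sup' (fun j => |μ j|) (Finset.mem_univ (Classical.arbitrary (Fin d))))
    · exact (Finset.sup'_lt_iff _).mpr fun i _ => hmu i
    · intro i; exact Finset.le_sup' (fun j => |μ j|) (Finset.mem_univ i)
  have hle : specNorm B ≤ r := by
    apply ContinuousLinearMap.opNorm_le_bound _ hr0
    intro x
    set T := Matrix.toEuclideanCLM (𝕜 := ℝ) B with hT
    have hsa : _root_.IsSelfAdjoint T := by
      have hstar : star B = B := by rw [Matrix.star_eq_conjTranspose, hB.eq]
      show star T = T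
      rw [hT]
      calc star (Matrix.toEuclideanCLM (𝕜 := ℝ) B)
          = Matrix.toEuclideanCLM (𝕜 := ℝ) (star B) := (map_star _ B).symm
        _ = _ := by rw [hstar]
    have hrepr : ∀ i, b.repr (T x) i = μ i * b.repr x i := by
      intro i
      rw [b.repr_apply_apply, b.repr_apply_apply]
      calc (inner ℝ (b i) (T x) : ℝ)
          = inner ℝ ((ContinuousLinearMap.adjoint T) (b i)) x :=
            (ContinuousLinearMap.adjoint_inner_left T x (b i)).symm
        _ = inner ℝ (T (b i)) x := by rw [hsa.adjoint_eq]
        _ = inner ℝ ((μ i : ℝ) • b i) x := by rw [hTb i]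
        _ = μ i * inner ℝ (b i) x := real_inner_smul_left _ _ _
    have hnorm : ‖T x‖ ^ 2 ≤ r ^ 2 * ‖x‖ ^ 2 := by
      have e1 : ‖T x‖ = ‖b.repr (T x)‖ := (b.repr.norm_map (T x)).symm
      have e2 : ‖x‖ = ‖b.repr x‖ := (b.repr.norm_map x).symm
      rw [e1, e2, EuclideanSpace.norm_eq, EuclideanSpace.norm_eq,
        sq_sqrt (by positivity), sq_sqrt (by positivity)]
      rw [Finset.mul_sum]
      apply Finset.sum_le_sum
      intro i _
      rw [hrepr i]
      have hile : |μ i| ≤ r := hrb i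
      have h4 : ‖μ i * b.repr x i‖ ^ 2 = (μ i)^2 * ‖b.repr x i‖^2 := by
        rw [norm_mul, mul_pow, Real.norm_eq_abs, sq_abs]
      rw [h4]
      have hsq : (μ i)^2 ≤ r^2 := by nlinarith [abs_nonneg (μ i), sq_abs (μ i)]
      nlinarith [norm_nonneg (b.repr x i), sq_nonneg (b.repr x i)]
    calc ‖T x‖ = Real.sqrt (‖T x‖ ^ 2) := (Real.sqrt_sq (norm_nonneg _)).symm
      _ ≤ Real.sqrt (r ^ 2 * ‖x‖ ^ 2) := Real.sqrt_le_sqrt hnorm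
      _ = r * ‖x‖ := by
          rw [Real.sqrt_mul (sq_nonneg _), Real.sqrt_sq hr0, Real.sqrt_sq (norm_nonneg _)]
  linarith

def fvec {d : ℕ} (A : Matrix (Fin d) (Fin d) ℝ) : EuclideanSpace ℝ (Fin d × Fin d) :=
  (WithLp.equiv 2 _).symm (fun p => A p.1 p.2)

lemma frobNorm_eq (A : Matrix (Fin d) (Fin d) ℝ) : frobNorm A = ‖fvec A‖ := by
  rw [frobNorm, EuclideanSpace.norm_eq]
  congr 1
  rw [Fintype.sum_prod_type]
  congr 1; ext i; congr 1; ext j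
  simp [fvec, WithLp.equiv_symm_apply, PiLp.toLp_apply, Real.norm_eq_abs, sq_abs]

lemma frobNorm_nonneg (A : Matrix (Fin d) (Fin d) ℝ) : 0 ≤ frobNorm A := Real.sqrt_nonneg _

lemma frobNorm_sq (A : Matrix (Fin d) (Fin d) ℝ) :
    frobNorm A ^ 2 = ∑ i, ∑ j, (A i j) ^ 2 := by
  rw [frobNorm, sq_sqrt (by positivity)]

lemma frobNorm_transpose (A : Matrix (Fin d) (Fin d) ℝ) : frobNorm Aᵀ = frobNorm A := by
  rw [frobNorm, frobNorm, Finset.sum_comm]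
  rfl

lemma frobNorm_add_le (A B : Matrix (Fin d) (Fin d) ℝ) :
    frobNorm (A + B) ≤ frobNorm A + frobNorm B := by
  rw [frobNorm_eq, frobNorm_eq, frobNorm_eq]
  have : fvec (A + B) = fvec A + fvec B := rfl
  rw [this]
  exact norm_add_le _ _

lemma abs_trace_mul_le (X Y : Matrix (Fin d) (Fin d) ℝ) :
    |(X * Y).trace| ≤ frobNorm X * frobNorm Y := by
  have htr : (X * Y).trace = ∑ p : Fin d × Fin d, X p.1 p.2 * Y p.2 p.1 := by
    rw [Matrix.trace, Fintype.sum_prod_type]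
    simp [Matrix.diag, Matrix.mul_apply]
  rw [htr]
  have hcs := Finset.sum_mul_sq_le_sq_mul_sq Finset.univ
    (fun p : Fin d × Fin d => X p.1 p.2) (fun p : Fin d × Fin d => Y p.2 p.1)
  have e1 : ∑ p : Fin d × Fin d, (X p.1 p.2) ^ 2 = frobNorm X ^ 2 := by
    rw [frobNorm_sq, Fintype.sum_prod_type]
  have e2 : ∑ p : Fin d × Fin d, (Y p.2 p.1) ^ 2 = frobNorm Y ^ 2 := by
    rw [frobNorm_sq, Fintype.sum_prod_type, Finset.sum_comm]
  simp only [e1, e2] at hcs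
  have h0 := mul_nonneg (frobNorm_nonneg X) (frobNorm_nonneg Y)
  nlinarith [abs_nonneg (∑ p : Fin d × Fin d, X p.1 p.2 * Y p.2 p.1),
    sq_abs (∑ p : Fin d × Fin d, X p.1 p.2 * Y p.2 p.1)]

lemma frobNorm_mul_le_left (M X : Matrix (Fin d) (Fin d) ℝ) :
    frobNorm (M * X) ≤ specNorm M * frobNorm X := by
  have h1 : frobNorm (M * X) ^ 2 ≤ (specNorm M * frobNorm X) ^ 2 := by
    rw [frobNorm_sq, Finset.sum_comm]
    have hcol : ∀ j, ∑ i, ((M * X) i j) ^ 2 = ‖toE (M *ᵥ fun k => X k j)‖ ^ 2 := by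
      intro j
      rw [norm_toE_sq]
      apply Finset.sum_congr rfl
      intro i _
      simp [Matrix.mul_apply, Matrix.mulVec, dotProduct]
    calc ∑ j, ∑ i, ((M * X) i j) ^ 2 = ∑ j, ‖toE (M *ᵥ fun k => X k j)‖ ^ 2 := by
          exact Finset.sum_congr rfl fun j _ => hcol j
      _ ≤ ∑ j, (specNorm M * ‖toE (fun k => X k j)‖) ^ 2 := by
          apply Finset.sum_le_sum
          intro j _
          have := norm_mulVec_le M (fun k => X k j)
          nlinarith [norm_nonneg (toE (M *ᵥ fun k => X k j)), norm_nonneg (toE (fun k => X k j)),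
            specNorm_nonneg M]
      _ = specNorm M ^ 2 * ∑ j, ‖toE (fun k => X k j)‖ ^ 2 := by
          rw [Finset.mul_sum]; congr 1; ext j; ring
      _ = (specNorm M * frobNorm X) ^ 2 := by
          rw [mul_pow, frobNorm_sq, Finset.sum_comm]
          congr 1
          exact Finset.sum_congr rfl fun j _ => norm_toE_sq _
  have h2 : 0 ≤ specNorm M * frobNorm X := mul_nonneg (specNorm_nonneg _) (frobNorm_nonneg _)
  nlinarith [frobNorm_nonneg (M * X)]

lemma frobNorm_mul_le_right (X M : Matrix (Fin d) (Fin d) ℝ) :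
    frobNorm (X * M) ≤ frobNorm X * specNorm M := by
  calc frobNorm (X * M) = frobNorm ((X * M)ᵀ) := (frobNorm_transpose _).symm
    _ = frobNorm (Mᵀ * Xᵀ) := by rw [Matrix.transpose_mul]
    _ ≤ specNorm Mᵀ * frobNorm Xᵀ := frobNorm_mul_le_left _ _
    _ = frobNorm X * specNorm M := by rw [specNorm_transpose, frobNorm_transpose]; ring

lemma posdef_conj {M : Matrix (Fin d) (Fin d) ℝ} (hM : M.PosDef)
    (B : Matrix (Fin d) (Fin d) ℝ) (hB : IsUnit B.det) : (Bᴴ * M * B).PosDef := by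
  apply Matrix.PosDef.of_dotProduct_mulVec_pos
  · exact Matrix.isHermitian_conjTranspose_mul_mul B hM.1
  · intro x hx
    have hBx : B *ᵥ x ≠ 0 := by
      intro hc
      apply hx
      have : B⁻¹ *ᵥ (B *ᵥ x) = x := by
        rw [Matrix.mulVec_mulVec, Matrix.nonsing_inv_mul _ hB, Matrix.one_mulVec]
      rw [← this, hc, Matrix.mulVec_zero]
    have := hM.dotProduct_mulVec_pos hBx
    simpa only [Matrix.star_mulVec, Matrix.dotProduct_mulVec, Matrix.vecMul_vecMul] using this

lemma trace_eq_sum_eigen {W : Matrix (Fin d) (Fin d) ℝ} (hW : W.IsHermitian) :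
    W.trace = ∑ i, hW.eigenvalues i := by
  conv_lhs => rw [hW.spectral_theorem]
  rw [Unitary.conjStarAlgAut_apply, Matrix.trace_mul_cycle, Unitary.coe_star_mul_self, one_mul]
  simp [Matrix.trace_diagonal]

lemma logdet_sub_le {M N : Matrix (Fin d) (Fin d) ℝ} (hM : M.PosDef) (hN : N.PosDef) :
    Real.log M.det - Real.log N.det ≤ (N⁻¹ * (M - N)).trace := by
  set C := msqrt N with hC
  have hCC : C * C = N := msqrt_mul_self hN.posSemidef
  have hCH : Cᴴ = C := msqrt_conjTranspose hN.posSemidef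
  have hdetN : 0 < N.det := hN.det_pos
  have hdetM : 0 < M.det := hM.det_pos
  have hdetC2 : C.det * C.det = N.det := by rw [← Matrix.det_mul, hCC]
  have hdetC : C.det ≠ 0 := fun h => by rw [h, zero_mul] at hdetC2; linarith
  have hCu : IsUnit C.det := isUnit_iff_ne_zero.mpr hdetC
  have hCinvu : IsUnit (C⁻¹).det := by
    rw [Matrix.det_nonsing_inv, Ring.inverse_eq_inv]
    exact isUnit_iff_ne_zero.mpr (inv_ne_zero hdetC)
  have hCinvH : (C⁻¹)ᴴ = C⁻¹ := by rw [Matrix.conjTranspose_nonsing_inv, hCH]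
  have hW : (C⁻¹ * M * C⁻¹).PosDef := by
    have := posdef_conj hM (C⁻¹) hCinvu
    rwa [hCinvH] at this
  set W := C⁻¹ * M * C⁻¹ with hWdef
  have hWH : W.IsHermitian := hW.1
  have hμpos : ∀ i, 0 < hWH.eigenvalues i := fun i => hW.eigenvalues_pos i
  have hdetW : W.det = ∏ i, hWH.eigenvalues i := by
    have := hWH.det_eq_prod_eigenvalues
    simpa using this
  have htrW : W.trace = ∑ i, hWH.eigenvalues i := trace_eq_sum_eigen hWH
  have hlogdet : Real.log W.det ≤ W.trace - d := by
    rw [hdetW, htrW, Real.log_prod (fun i _ => ne_of_gt (hμpos i))]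
    calc ∑ i, Real.log (hWH.eigenvalues i) ≤ ∑ i, (hWH.eigenvalues i - 1) :=
          Finset.sum_le_sum fun i _ => Real.log_le_sub_one_of_pos (hμpos i)
      _ = (∑ i, hWH.eigenvalues i) - d := by
          rw [Finset.sum_sub_distrib]
          simp
  have hdetWeq : W.det = M.det / N.det := by
    rw [hWdef, Matrix.det_mul, Matrix.det_mul, Matrix.det_nonsing_inv, Ring.inverse_eq_inv,
      ← hdetC2]
    field_simp
  have hNinv : N⁻¹ = C⁻¹ * C⁻¹ := by
    have h := Matrix.mul_inv_rev C C
    rwa [hCC] at h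
  have htrWeq : W.trace = (N⁻¹ * M).trace := by
    rw [hWdef, Matrix.trace_mul_cycle, hNinv]
  have hNinvN : N⁻¹ * N = 1 := Matrix.nonsing_inv_mul _ (isUnit_iff_ne_zero.mpr (ne_of_gt hdetN))
  have hrhs : (N⁻¹ * (M - N)).trace = (N⁻¹ * M).trace - d := by
    rw [mul_sub, hNinvN, Matrix.trace_sub, Matrix.trace_one]
    simp
  rw [hrhs]
  have hlog : Real.log W.det = Real.log M.det - Real.log N.det := by
    rw [hdetWeq, Real.log_div (ne_of_gt hdetM) (ne_of_gt hdetN)]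
  rw [← hlog, ← htrWeq]
  exact hlogdet

/-- `−(1/2)·ln det(I − Θ^{1/2}HΘ^{1/2}) ≤ Υ(H;Θ)` for `Θ ⪯ Θ*` PSD
with `‖Θ^{1/2}Θ*^{−1/2} − I‖ ≤ δ` and `−Θ*⁻¹ ≺ H ≺ Θ*⁻¹`. -/
theorem statement4 {d : ℕ} (Θstar : Matrix (Fin d) (Fin d) ℝ) (hstarSym : Θstar.IsSymm)
    (hstar : Θstar.PosDef) (δ : ℝ) (hδ0 : 0 ≤ δ) (hδ2 : δ ≤ 2)
    (Θ : Matrix (Fin d) (Fin d) ℝ) (hΘsym : Θ.IsSymm) (hΘpsd : Θ.PosSemidef)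
    (hΘle : (Θstar - Θ).PosSemidef)
    (hΘδ : specNorm (msqrt Θ * (msqrt Θstar)⁻¹ - 1) ≤ δ)
    (H : Matrix (Fin d) (Fin d) ℝ) (hHsym : H.IsSymm)
    (hH1 : (Θstar⁻¹ - H).PosDef) (hH2 : (H + Θstar⁻¹).PosDef) :
    -(1/2) * Real.log ((1 - msqrt Θ * H * msqrt Θ).det) ≤ Upsilon Θstar δ H Θ := by
  -- basic objects
  set S := msqrt Θstar with hSdef
  set T := msqrt Θ with hTdef
  have hSsq : S = msqrt Θstar := rfl
  have hTsq : T = msqrt Θ := rfl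
  have hSS : S * S = Θstar := by rw [hSsq]; exact msqrt_mul_self hstar.posSemidef
  have hTT : T * T = Θ := by rw [hTsq]; exact msqrt_mul_self hΘpsd
  have hSH : Sᴴ = S := by rw [hSsq]; exact msqrt_conjTranspose hstar.posSemidef
  have hTH : Tᴴ = T := by rw [hTsq]; exact msqrt_conjTranspose hΘpsd
  have hSt : Sᵀ = S := by rw [← Matrix.conjTranspose_eq_transpose_of_trivial, hSH]
  have hTt : Tᵀ = T := by rw [← Matrix.conjTranspose_eq_transpose_of_trivial, hTH]
  have hdetS2 : S.det * S.det = Θstar.det := by rw [← Matrix.det_mul, hSS]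
  have hdetS : S.det ≠ 0 := by
    intro h
    rw [h, zero_mul] at hdetS2
    exact absurd hdetS2.symm (ne_of_gt hstar.det_pos)
  have hSu : IsUnit S.det := isUnit_iff_ne_zero.mpr hdetS
  have hSinv : Θstar⁻¹ = S⁻¹ * S⁻¹ := by
    have h := Matrix.mul_inv_rev S S
    rwa [hSS] at h
  have hSinvH : (S⁻¹)ᴴ = S⁻¹ := by rw [Matrix.conjTranspose_nonsing_inv, hSH]
  have hSinvt : (S⁻¹)ᵀ = S⁻¹ := by rw [← Matrix.conjTranspose_eq_transpose_of_trivial, hSinvH]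
  have hSconj : S * Θstar⁻¹ * S = 1 := by
    rw [hSinv]
    calc S * (S⁻¹ * S⁻¹) * S = (S * S⁻¹) * (S⁻¹ * S) := by simp only [mul_assoc]
      _ = 1 := by rw [Matrix.mul_nonsing_inv _ hSu, Matrix.nonsing_inv_mul _ hSu, one_mul]
  have hSconj2 : S⁻¹ * Θstar * S⁻¹ = 1 := by
    rw [← hSS]
    calc S⁻¹ * (S * S) * S⁻¹ = (S⁻¹ * S) * (S * S⁻¹) := by simp only [mul_assoc]
      _ = 1 := by rw [Matrix.mul_nonsing_inv _ hSu, Matrix.nonsing_inv_mul _ hSu, one_mul]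
  -- B and its properties
  set B := S * H * S with hBdef
  have hB_PD1 : (1 - B).PosDef := by
    have h := posdef_conj hH1 S hSu
    rw [hSH] at h
    have e : S * (Θstar⁻¹ - H) * S = 1 - B := by
      rw [mul_sub, sub_mul, hBdef, hSconj]
    rwa [e] at h
  have hB_PD2 : (1 + B).PosDef := by
    have h := posdef_conj hH2 S hSu
    rw [hSH] at h
    have e : S * (H + Θstar⁻¹) * S = 1 + B := by
      rw [mul_add, add_mul, hBdef, hSconj, add_comm]
    rwa [e] at h
  have hBH : B.IsHermitian := by
    have h := Matrix.isHermitian_conjTranspose_mul_mul S (isHermitian_of_isSymm hHsym)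
    rwa [hSH] at h
  have hBnorm : specNorm B < 1 := specNorm_lt_one hBH hB_PD1 hB_PD2
  -- Q and its properties
  set Q := T * S⁻¹ with hQdef
  have hQt : Qᵀ = S⁻¹ * T := by rw [hQdef, Matrix.transpose_mul, hSinvt, hTt]
  have hQδ : specNorm (Q - 1) ≤ δ := hΘδ
  have hQn : specNorm Q ≤ 1 := by
    apply specNorm_le_one_of_contract
    have h := hΘle.conjTranspose_mul_mul_same (B := S⁻¹)
    rw [hSinvH] at h
    have e : S⁻¹ * (Θstar - Θ) * S⁻¹ = 1 - Qᵀ * Q := by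
      rw [mul_sub, sub_mul, hSconj2, hQt, hQdef]
      congr 1
      calc S⁻¹ * Θ * S⁻¹ = S⁻¹ * (T * T) * S⁻¹ := by rw [hTT]
        _ = (S⁻¹ * T) * (T * S⁻¹) := by simp only [mul_assoc]
    rwa [e] at h
  have hQtn : specNorm Qᵀ ≤ 1 := by rw [specNorm_transpose]; exact hQn
  have hQtδ : specNorm (Qᵀ - 1) ≤ δ := by
    have e : Qᵀ - 1 = (Q - 1)ᵀ := by rw [Matrix.transpose_sub, Matrix.transpose_one]
    rw [e, specNorm_transpose]; exact hQδ
  -- A and its properties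
  set A := T * H * T with hAdef
  have hAeq : A = Q * B * Qᵀ := by
    rw [hQdef, hQt, hBdef, hAdef]
    calc T * H * T = T * (1 * H * 1) * T := by rw [one_mul, mul_one]
      _ = T * ((S⁻¹ * S) * H * (S * S⁻¹)) * T := by
          rw [Matrix.nonsing_inv_mul _ hSu, Matrix.mul_nonsing_inv _ hSu]
      _ = T * S⁻¹ * (S * H * S) * (S⁻¹ * T) := by simp only [mul_assoc]
  have hAH : A.IsHermitian := by
    have h := Matrix.isHermitian_conjTranspose_mul_mul T (isHermitian_of_isSymm hHsym)
    rwa [hTH] at h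
  have hAnormB : specNorm A ≤ specNorm B := by
    rw [hAeq]
    calc specNorm (Q * B * Qᵀ) ≤ specNorm (Q * B) * specNorm Qᵀ := specNorm_mul_le _ _
      _ ≤ (specNorm Q * specNorm B) * specNorm Qᵀ :=
          mul_le_mul_of_nonneg_right (specNorm_mul_le _ _) (specNorm_nonneg _)
      _ ≤ (1 * specNorm B) * 1 := by
          apply mul_le_mul ?_ hQtn (specNorm_nonneg _) ?_
          · exact mul_le_mul_of_nonneg_right hQn (specNorm_nonneg _)
          · exact mul_nonneg zero_le_one (specNorm_nonneg _)
      _ = specNorm B := by ring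
  have hAnorm : specNorm A < 1 := lt_of_le_of_lt hAnormB hBnorm
  have h1A_PD : (1 - A).PosDef := posDef_one_sub hAH hAnorm
  have hdet1A : IsUnit (1 - A).det := (Matrix.isUnit_iff_isUnit_det _).mp h1A_PD.isUnit
  -- Frobenius bounds
  have hfrobA : frobNorm A ≤ frobNorm B := by
    rw [hAeq, mul_assoc]
    calc frobNorm (Q * (B * Qᵀ)) ≤ specNorm Q * frobNorm (B * Qᵀ) := frobNorm_mul_le_left _ _
      _ ≤ 1 * (frobNorm B * 1) := by
          apply mul_le_mul hQn ?_ (frobNorm_nonneg _) zero_le_one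
          calc frobNorm (B * Qᵀ) ≤ frobNorm B * specNorm Qᵀ := frobNorm_mul_le_right _ _
            _ ≤ frobNorm B * 1 := mul_le_mul_of_nonneg_left hQtn (frobNorm_nonneg _)
      _ = frobNorm B := by ring
  have hABdiff : A - B = (Q - 1) * B * Qᵀ + B * (Qᵀ - 1) := by
    rw [hAeq]; noncomm_ring
  have hfrobAB : frobNorm (A - B) ≤ 2 * δ * frobNorm B := by
    rw [hABdiff]
    calc frobNorm ((Q - 1) * B * Qᵀ + B * (Qᵀ - 1))
        ≤ frobNorm ((Q - 1) * B * Qᵀ) + frobNorm (B * (Qᵀ - 1)) := frobNorm_add_le _ _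
      _ ≤ δ * frobNorm B + frobNorm B * δ := by
          apply add_le_add
          · rw [mul_assoc]
            calc frobNorm ((Q - 1) * (B * Qᵀ))
                ≤ specNorm (Q - 1) * frobNorm (B * Qᵀ) := frobNorm_mul_le_left _ _
              _ ≤ δ * (frobNorm B * 1) := by
                  apply mul_le_mul hQδ ?_ (frobNorm_nonneg _) hδ0
                  calc frobNorm (B * Qᵀ) ≤ frobNorm B * specNorm Qᵀ := frobNorm_mul_le_right _ _
                    _ ≤ frobNorm B * 1 := mul_le_mul_of_nonneg_left hQtn (frobNorm_nonneg _)
              _ = δ * frobNorm B := by ring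
          · calc frobNorm (B * (Qᵀ - 1))
                ≤ frobNorm B * specNorm (Qᵀ - 1) := frobNorm_mul_le_right _ _
              _ ≤ frobNorm B * δ := mul_le_mul_of_nonneg_left hQtδ (frobNorm_nonneg _)
      _ = 2 * δ * frobNorm B := by ring
  -- trace identities
  have hTrA : A.trace = (Θ * H).trace := by rw [hAdef, Matrix.trace_mul_cycle, hTT]
  have hTrB : B.trace = (Θstar * H).trace := by rw [hBdef, Matrix.trace_mul_cycle, hSS]
  have hTrdiff : (A - B).trace = ((Θ - Θstar) * H).trace := by
    rw [Matrix.trace_sub, hTrA, hTrB, Matrix.sub_mul, Matrix.trace_sub]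
  -- log-det chain
  have hkey := logdet_sub_le hB_PD1 h1A_PD
  have he1 : (1 : Matrix (Fin d) (Fin d) ℝ) - B - (1 - A) = A - B := by abel
  rw [he1] at hkey
  have hinv : (1 - A)⁻¹ = 1 + (1 - A)⁻¹ * A := by
    have h2 : (1 - A)⁻¹ * (1 - A) = 1 := Matrix.nonsing_inv_mul _ hdet1A
    rw [mul_sub, mul_one] at h2
    exact sub_eq_iff_eq_add.mp h2
  have hsplit : ((1 - A)⁻¹ * (A - B)).trace
      = (A - B).trace + (((1 - A)⁻¹ * A) * (A - B)).trace := by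
    conv_lhs => rw [hinv]
    rw [add_mul, one_mul, Matrix.trace_add]
  have hG0 : 0 < 1 - specNorm B := by linarith
  have hinvnorm : specNorm (1 - A)⁻¹ ≤ (1 - specNorm B)⁻¹ := by
    calc specNorm (1 - A)⁻¹ ≤ (1 - specNorm A)⁻¹ := specNorm_inv_one_sub hdet1A hAnorm
      _ ≤ (1 - specNorm B)⁻¹ := by
          apply inv_anti₀ hG0
          linarith
  have hcorr : (((1 - A)⁻¹ * A) * (A - B)).trace
      ≤ (1 - specNorm B)⁻¹ * frobNorm B * (2 * δ * frobNorm B) := by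
    have habs : |(((1 - A)⁻¹ * A) * (A - B)).trace|
        ≤ (1 - specNorm B)⁻¹ * frobNorm B * (2 * δ * frobNorm B) := by
      calc |(((1 - A)⁻¹ * A) * (A - B)).trace|
          ≤ frobNorm ((1 - A)⁻¹ * A) * frobNorm (A - B) := abs_trace_mul_le _ _
        _ ≤ ((1 - specNorm B)⁻¹ * frobNorm B) * (2 * δ * frobNorm B) := by
            apply mul_le_mul ?_ hfrobAB (frobNorm_nonneg _) ?_
            · calc frobNorm ((1 - A)⁻¹ * A)
                  ≤ specNorm (1 - A)⁻¹ * frobNorm A := frobNorm_mul_le_left _ _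
                _ ≤ (1 - specNorm B)⁻¹ * frobNorm B :=
                    mul_le_mul hinvnorm hfrobA (frobNorm_nonneg _)
                      (inv_nonneg.mpr (le_of_lt hG0))
            · exact mul_nonneg (inv_nonneg.mpr (le_of_lt hG0)) (frobNorm_nonneg _)
    exact le_trans (le_abs_self _) habs
  -- assemble
  simp only [Upsilon]
  rw [← hSdef, ← hBdef]
  set L1 := Real.log (1 - A).det with hL1
  set L2 := Real.log (1 - B).det with hL2
  set tr := ((Θ - Θstar) * H).trace with htr
  set F := frobNorm B with hF
  set s := specNorm B with hs
  have hkey2 : L2 - L1 ≤ tr + (1 - s)⁻¹ * F * (2 * δ * F) := by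
    rw [hsplit, hTrdiff] at hkey
    linarith [hcorr]
  have hterm : δ * (2 + δ) * F ^ 2 / (2 * (1 - s)) - (1/2) * ((1 - s)⁻¹ * F * (2 * δ * F))
      = δ ^ 2 * F ^ 2 / (2 * (1 - s)) := by
    field_simp
    ring
  have hpos : 0 ≤ δ ^ 2 * F ^ 2 / (2 * (1 - s)) := by positivity
  linarith

end
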